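/- Let r ≥ 1 be an integer and work in the ring ℚ[[x_1, …, x_r]] of formal power series in r variables over ℚ. Let E_i = ∑_{n≥0} x_i^n / n! be the formal exponential of x_i, and for 0 ≤ p ≤ r let e_p denote the p-th elementary symmetric polynomial in r variables. Then the power series F = ∑_{p=0}^{r} (-1)^p · p · e_p(E_1, …, E_r) satisfies: every homogeneous component of F of total degree strictly less than r−1 vanishes, and the homogeneous component of F of total degree r−1 equals (-1)^r · e_{r-1}(x_1, …, x_r). -/

import Mathlib

open MvPowerSeries Finset

/-- The formal exponential `E_i = ∑_{n ≥ 0} x_i^n / n!` of the `i`-th variable,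
as a multivariate formal power series over `ℚ`. -/
noncomputable def formalExpVar (r : ℕ) (i : Fin r) : MvPowerSeries (Fin r) ℚ :=
  fun m => if m = Finsupp.single i (m i) then (1 : ℚ) / Nat.factorial (m i) else 0

lemma coeff_formalExpVar (r : ℕ) (i : Fin r) (m : Fin r →₀ ℕ) :
    MvPowerSeries.coeff m (formalExpVar r i)
      = if m = Finsupp.single i (m i) then (1 : ℚ) / Nat.factorial (m i) else 0 := rfl

lemma coeff_prod_formalExpVar (r : ℕ) (S : Finset (Fin r)) (m : Fin r →₀ ℕ) :
    MvPowerSeries.coeff m (∏ i ∈ S, formalExpVar r i) =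
      if m.support ⊆ S then ∏ i, (1 : ℚ) / Nat.factorial (m i) else 0 := by
  induction S using Finset.induction_on generalizing m with
  | empty =>
    rw [Finset.prod_empty, MvPowerSeries.coeff_one]
    by_cases hm : m = 0
    · subst hm; simp
    · rw [if_neg hm, if_neg]
      rw [Finset.subset_empty, Finsupp.support_eq_empty]
      exact hm
  | @insert a S ha ih =>
    rw [Finset.prod_insert ha, MvPowerSeries.coeff_mul]
    have key : ∀ u v : Fin r →₀ ℕ, u + v = m → u = Finsupp.single a (u a) →
        v.support ⊆ S → u = Finsupp.single a (m a) ∧ v = Finsupp.erase a m := by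
      intro u v huv hu hv
      have hva : v a = 0 := by
        by_contra hva
        exact ha (hv (Finsupp.mem_support_iff.2 hva))
      have hma : m a = u a := by
        rw [← huv, Finsupp.add_apply, hva, add_zero]
      constructor
      · rw [hu, hma]
      · ext i
        by_cases hi : i = a
        · subst hi; rw [Finsupp.erase_same, hva]
        · rw [Finsupp.erase_ne hi, ← huv, Finsupp.add_apply, hu,
            Finsupp.single_apply, if_neg (fun hh => hi hh.symm), zero_add]
    by_cases h : m.support ⊆ insert a S
    · rw [if_pos h]
      rw [Finset.sum_eq_single_of_mem (Finsupp.single a (m a), Finsupp.erase a m)]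
      · rw [coeff_formalExpVar, ih]
        rw [if_pos, if_pos]
        · have hne : ∀ i : Fin r, i ≠ a → (Finsupp.erase a m) i = m i :=
            fun i hi => Finsupp.erase_ne hi
          have hp : ∏ x ∈ univ.erase a, (1:ℚ)/((Finsupp.erase a m) x).factorial
              = ∏ x ∈ univ.erase a, (1:ℚ)/(m x).factorial :=
            Finset.prod_congr rfl fun x hx => by rw [hne x (Finset.ne_of_mem_erase hx)]
          rw [← Finset.mul_prod_erase Finset.univ (fun i => (1:ℚ)/Nat.factorial (m i))
                (Finset.mem_univ a),
              ← Finset.mul_prod_erase Finset.univ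
                (fun i => (1:ℚ)/Nat.factorial ((Finsupp.erase a m) i)) (Finset.mem_univ a),
              hp]
          simp [Finsupp.erase_same]
        · intro i hi
          rw [Finsupp.support_erase] at hi
          rcases Finset.mem_insert.1 (h (Finset.mem_of_mem_erase hi)) with h1 | h1
          · exact absurd h1 (Finset.ne_of_mem_erase hi)
          · exact h1
        · simp
      · rw [Finset.HasAntidiagonal.mem_antidiagonal]
        exact Finsupp.single_add_erase a m
      · rintro ⟨u, v⟩ hb hne
        rw [Finset.HasAntidiagonal.mem_antidiagonal] at hb
        rw [coeff_formalExpVar, ih]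
        by_cases hu : u = Finsupp.single a (u a)
        · by_cases hv : v.support ⊆ S
          · exact absurd (Prod.ext (key u v hb hu hv).1 (key u v hb hu hv).2) hne
          · rw [if_neg hv, mul_zero]
        · rw [if_neg hu, zero_mul]
    · rw [if_neg h]
      apply Finset.sum_eq_zero
      rintro ⟨u, v⟩ hb
      rw [Finset.HasAntidiagonal.mem_antidiagonal] at hb
      rw [coeff_formalExpVar, ih]
      by_cases hu : u = Finsupp.single a (u a)
      · by_cases hv : v.support ⊆ S
        · exfalso
          apply h
          rw [← hb]
          refine (Finsupp.support_add).trans ?_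
          intro i hi
          rcases Finset.mem_union.1 hi with h1 | h1
          · rw [(key u v hb hu hv).1] at h1
            exact Finset.mem_insert.2 (Or.inl
              (Finset.mem_singleton.1 (Finsupp.support_single_subset h1)))
          · exact Finset.mem_insert.2 (Or.inr (hv h1))
        · rw [if_neg hv, mul_zero]
      · rw [if_neg hu, zero_mul]

lemma gsum {α : Type*} [DecidableEq α] (A : Finset α) :
    ∑ U ∈ A.powerset, (-1 : ℚ) ^ U.card = if A = ∅ then 1 else 0 := by
  induction A using Finset.induction_on with
  | empty => simp
  | @insert a A ha ih =>
    rw [Finset.sum_powerset_insert ha, ih]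
    have : ∀ U ∈ A.powerset, (-1:ℚ) ^ (insert a U).card = -(-1:ℚ)^U.card := by
      intro U hU
      rw [Finset.card_insert_of_notMem (fun hh => ha (Finset.mem_powerset.1 hU hh)),
        pow_succ, mul_neg_one]
    rw [Finset.sum_congr rfl this, Finset.sum_neg_distrib, ih]
    simp [Finset.insert_ne_empty]

lemma hsum {α : Type*} [DecidableEq α] (A : Finset α) :
    ∑ U ∈ A.powerset, (-1 : ℚ) ^ U.card * U.card = if A.card = 1 then -1 else 0 := by
  induction A using Finset.induction_on with
  | empty => simp
  | @insert a A ha ih =>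
    rw [Finset.sum_powerset_insert ha]
    have : ∀ U ∈ A.powerset, (-1:ℚ) ^ (insert a U).card * (insert a U).card
        = -((-1:ℚ)^U.card * U.card) - (-1:ℚ)^U.card := by
      intro U hU
      rw [Finset.card_insert_of_notMem (fun hh => ha (Finset.mem_powerset.1 hU hh)),
        pow_succ, mul_neg_one]
      push_cast
      ring
    rw [Finset.sum_congr rfl this, Finset.sum_sub_distrib, Finset.sum_neg_distrib, ih, gsum,
      Finset.card_insert_of_notMem ha]
    by_cases hA : A = ∅
    · subst hA; simp
    · rw [if_neg hA, if_neg (fun hh => hA (Finset.card_eq_zero.1 (Nat.succ_injective hh)))]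
      ring

lemma superset_sum {α : Type*} [DecidableEq α] [Fintype α] (T : Finset α)
    (f : Finset α → ℚ) :
    ∑ S ∈ (Finset.univ : Finset α).powerset, (if T ⊆ S then f S else 0)
      = ∑ U ∈ ((Finset.univ : Finset α) \ T).powerset, f (T ∪ U) := by
  rw [← Finset.sum_filter]
  apply Finset.sum_nbij' (fun S => S \ T) (fun U => T ∪ U)
  · intro S hS
    rw [Finset.mem_filter] at hS
    exact Finset.mem_powerset.2 (Finset.sdiff_subset_sdiff (Finset.subset_univ S) le_rfl)
  · intro U hU
    exact Finset.mem_filter.2 ⟨Finset.mem_powerset.2 (Finset.subset_univ _),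
      Finset.subset_union_left⟩
  · intro S hS
    exact Finset.union_sdiff_of_subset (Finset.mem_filter.1 hS).2
  · intro U hU
    exact Finset.union_sdiff_cancel_left
      (Finset.disjoint_of_subset_right (Finset.mem_powerset.1 hU) Finset.sdiff_disjoint.symm)
  · intro S hS
    rw [Finset.union_sdiff_of_subset (Finset.mem_filter.1 hS).2]

lemma coeff_aeval_esymm (r p : ℕ) (m : Fin r →₀ ℕ) :
    MvPowerSeries.coeff m
        (MvPolynomial.aeval (formalExpVar r) (MvPolynomial.esymm (Fin r) ℚ p)) =
      ∑ S ∈ Finset.powersetCard p Finset.univ,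
        (if m.support ⊆ S then ∏ i, (1:ℚ)/Nat.factorial (m i) else 0) := by
  rw [MvPolynomial.esymm, map_sum, map_sum]
  refine Finset.sum_congr rfl fun S _ => ?_
  rw [map_prod]
  simp_rw [MvPolynomial.aeval_X]
  exact coeff_prod_formalExpVar r S m

lemma key_coeff (r : ℕ) (m : Fin r →₀ ℕ) :
    MvPowerSeries.coeff m
      (∑ p ∈ Finset.range (r + 1), ((-1 : ℚ) ^ p * p) •
        MvPolynomial.aeval (formalExpVar r) (MvPolynomial.esymm (Fin r) ℚ p)) =
    (∏ i, (1:ℚ)/Nat.factorial (m i)) *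
      ((-1:ℚ)^m.support.card *
        (m.support.card * (if (Finset.univ \ m.support : Finset (Fin r)) = ∅ then 1 else 0)
          + (if (Finset.univ \ m.support : Finset (Fin r)).card = 1 then (-1:ℚ) else 0))) := by
  rw [map_sum]
  simp_rw [map_smul, smul_eq_mul, coeff_aeval_esymm]
  set c : ℚ := ∏ i, (1:ℚ)/Nat.factorial (m i) with hc
  have step1 : ∀ p ∈ Finset.range (r+1),
      ((-1:ℚ)^p * p) * ∑ S ∈ Finset.powersetCard p Finset.univ,
        (if m.support ⊆ S then c else 0)
      = ∑ S ∈ Finset.powersetCard p Finset.univ,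
        (if m.support ⊆ S then (-1:ℚ)^S.card * S.card * c else 0) := by
    intro p _
    rw [Finset.mul_sum]
    refine Finset.sum_congr rfl fun S hS => ?_
    rw [Finset.mem_powersetCard_univ] at hS
    by_cases h : m.support ⊆ S
    · rw [if_pos h, if_pos h, hS]
    · rw [if_neg h, if_neg h, mul_zero]
  rw [Finset.sum_congr rfl step1]
  have hcard : Finset.card (Finset.univ : Finset (Fin r)) = r := by
    rw [Finset.card_univ, Fintype.card_fin]
  have hps : ∑ S ∈ (Finset.univ : Finset (Fin r)).powerset,
      (if m.support ⊆ S then (-1:ℚ)^S.card * S.card * c else 0)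
      = ∑ j ∈ Finset.range (r+1), ∑ S ∈ Finset.powersetCard j Finset.univ,
          (if m.support ⊆ S then (-1:ℚ)^S.card * S.card * c else 0) := by
    rw [Finset.sum_powerset, hcard]
  rw [← hps]
  rw [superset_sum m.support (fun S => (-1:ℚ)^S.card * S.card * c)]
  have step2 : ∀ U ∈ (Finset.univ \ m.support : Finset (Fin r)).powerset,
      (-1:ℚ)^(m.support ∪ U).card * (m.support ∪ U).card * c
      = c * ((-1:ℚ)^m.support.card *
          ((m.support.card : ℚ) * (-1:ℚ)^U.card + (-1:ℚ)^U.card * U.card)) := by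
    intro U hU
    have hdisj : Disjoint m.support U :=
      Finset.disjoint_of_subset_right (Finset.mem_powerset.1 hU) Finset.sdiff_disjoint.symm
    rw [Finset.card_union_of_disjoint hdisj, pow_add]
    push_cast
    ring
  rw [Finset.sum_congr rfl step2, ← Finset.mul_sum, ← Finset.mul_sum,
    Finset.sum_add_distrib, ← Finset.mul_sum, gsum, hsum]

lemma ind_apply {α : Type*} [DecidableEq α] (S : Finset α) (j : α) :
    ((∑ i ∈ S, Finsupp.single i 1 : α →₀ ℕ)) j = if j ∈ S then 1 else 0 := by
  rw [Finset.sum_apply']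
  simp [Finsupp.single_apply]

lemma ind_support {α : Type*} [DecidableEq α] (S : Finset α) :
    ((∑ i ∈ S, Finsupp.single i 1 : α →₀ ℕ)).support = S := by
  ext j
  rw [Finsupp.mem_support_iff, ind_apply]
  by_cases h : j ∈ S <;> simp [h]

lemma coeff_esymm_ne (r k : ℕ) (m : Fin r →₀ ℕ) (h : m.support.card ≠ k) :
    MvPolynomial.coeff m (MvPolynomial.esymm (Fin r) ℚ k) = 0 := by
  rw [MvPolynomial.esymm_eq_sum_monomial, MvPolynomial.coeff_sum]
  apply Finset.sum_eq_zero
  intro S hS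
  rw [Finset.mem_powersetCard_univ] at hS
  rw [MvPolynomial.coeff_monomial, if_neg]
  intro he
  apply h
  rw [← he, ind_support, hS]

lemma coeff_esymm_ind (r : ℕ) (T : Finset (Fin r)) :
    MvPolynomial.coeff (∑ i ∈ T, Finsupp.single i 1 : Fin r →₀ ℕ)
      (MvPolynomial.esymm (Fin r) ℚ T.card) = 1 := by
  rw [MvPolynomial.esymm_eq_sum_monomial, MvPolynomial.coeff_sum]
  rw [Finset.sum_eq_single_of_mem T (Finset.mem_powersetCard_univ.2 rfl)]
  · rw [MvPolynomial.coeff_monomial, if_pos rfl]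
  · intro S hS hne
    rw [MvPolynomial.coeff_monomial, if_neg]
    intro he
    apply hne
    have := congrArg Finsupp.support he
    rwa [ind_support, ind_support] at this

lemma support_card_le_degree (r : ℕ) (m : Fin r →₀ ℕ) :
    m.support.card ≤ m.sum fun _ e => e := by
  rw [Finsupp.sum, Finset.card_eq_sum_ones]
  exact Finset.sum_le_sum fun i hi =>
    Nat.one_le_iff_ne_zero.2 (Finsupp.mem_support_iff.1 hi)

/-- Symmetric-function identity ("standard computation of Chern classes") used
in the proof of Proposition 2.9: the series
`F = ∑_{p=0}^{r} (-1)^p p · e_p(E_1, …, E_r)` (with `E_i = exp x_i`) has all its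
homogeneous components of total degree `< r-1` equal to zero, and its
homogeneous component of total degree `r-1` equals `(-1)^r e_{r-1}(x_1,…,x_r)`. -/
theorem esymm_exp_lowest_term (r : ℕ) (hr : 1 ≤ r) :
    (∀ m : Fin r →₀ ℕ, (m.sum fun _ e => e) < r - 1 →
      MvPowerSeries.coeff m
        (∑ p ∈ Finset.range (r + 1), ((-1 : ℚ) ^ p * p) •
          MvPolynomial.aeval (formalExpVar r) (MvPolynomial.esymm (Fin r) ℚ p)) = 0) ∧
    (∀ m : Fin r →₀ ℕ, (m.sum fun _ e => e) = r - 1 →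
      MvPowerSeries.coeff m
        (∑ p ∈ Finset.range (r + 1), ((-1 : ℚ) ^ p * p) •
          MvPolynomial.aeval (formalExpVar r) (MvPolynomial.esymm (Fin r) ℚ p)) =
        (-1 : ℚ) ^ r * MvPolynomial.coeff m (MvPolynomial.esymm (Fin r) ℚ (r - 1))) := by
  have hAcard : ∀ m : Fin r →₀ ℕ,
      (Finset.univ \ m.support : Finset (Fin r)).card = r - m.support.card := by
    intro m
    rw [Finset.card_sdiff_of_subset (Finset.subset_univ _), Finset.card_univ, Fintype.card_fin]
  -- vanishing when support is small
  have hvanish : ∀ m : Fin r →₀ ℕ, m.support.card < r - 1 →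
      MvPowerSeries.coeff m
        (∑ p ∈ Finset.range (r + 1), ((-1 : ℚ) ^ p * p) •
          MvPolynomial.aeval (formalExpVar r) (MvPolynomial.esymm (Fin r) ℚ p)) = 0 := by
    intro m hm
    rw [key_coeff]
    rw [if_neg, if_neg]
    · ring
    · rw [hAcard]; omega
    · intro he
      have := hAcard m
      rw [he, Finset.card_empty] at this
      omega
  constructor
  · intro m hm
    exact hvanish m (lt_of_le_of_lt (support_card_le_degree r m) hm)
  · intro m hm
    by_cases hts : m.support.card = r - 1
    · -- m is the indicator of its support
      have hone : ∀ i ∈ m.support, 1 = m i := by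
        rw [← Finset.sum_eq_sum_iff_of_le
          (fun i hi => Nat.one_le_iff_ne_zero.2 (Finsupp.mem_support_iff.1 hi))]
        rw [← Finset.card_eq_sum_ones, hts, ← hm]
        rfl
      have hmind : m = ∑ i ∈ m.support, Finsupp.single i 1 := by
        ext i
        rw [ind_apply]
        by_cases hi : i ∈ m.support
        · rw [if_pos hi, ← hone i hi]
        · rw [if_neg hi]
          exact Finsupp.notMem_support_iff.1 hi
      have hc : (∏ i, (1:ℚ)/Nat.factorial (m i)) = 1 := by
        apply Finset.prod_eq_one
        intro i _
        by_cases hi : i ∈ m.support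
        · rw [← hone i hi]; norm_num
        · rw [Finsupp.notMem_support_iff.1 hi]; norm_num
      rw [key_coeff, hc, if_neg, if_pos]
      · have hrc : MvPolynomial.coeff m (MvPolynomial.esymm (Fin r) ℚ (r-1)) = 1 := by
          conv_lhs => rw [hmind, ← hts]
          exact coeff_esymm_ind r m.support
        rw [hrc, hts, mul_one]
        have : (-1:ℚ)^r = (-1:ℚ)^(r-1) * (-1) := by
          rw [← pow_succ]
          congr 1
          omega
        rw [this]
        ring
      · rw [hAcard]; omega
      · intro he
        have := hAcard m
        rw [he, Finset.card_empty] at this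
        omega
    · have hlt : m.support.card < r - 1 :=
        lt_of_le_of_ne (by rw [← hm]; exact support_card_le_degree r m) hts
      rw [hvanish m hlt, coeff_esymm_ne r (r-1) m hts, mul_zero]
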